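/- Let V be a finite type and I a finite index set. For each i ∈ I let N_i ⊆ V be subsets that are pairwise disjoint, and let L_i be a real V×V matrix such that for every j ≠ i, every entry of L_i in a row or column indexed by an element of N_j is zero. Let N := ⋃_{i∈I} N_i and K := V \ N, and let L := ∑_{i∈I} L_i. Assume that for each i, the principal submatrix of L_i indexed by N_i (i.e., L_i.submatrix restricted to N_i × N_i) is invertible. Then the principal submatrix L[N,N] of L indexed by N is invertible, and the Schur complement of L eliminating N satisfies L[K,K] − L[K,N] * (L[N,N])⁻¹ * L[N,K] = ∑_{i∈I} ( L_i[K,K] − L_i[K,N_i] * (L_i[N_i,N_i])⁻¹ * L_i[N_i,K] ), where for a matrix M and subsets X, Y ⊆ V, M[X,Y] denotes the submatrix of M with rows indexed by X and columns indexed by Y (the matrix L_i[K,K] − L_i[K,N_i] * (L_i[N_i,N_i])⁻¹ * L_i[N_i,K] being the K×K matrix obtained by the Schur complement of L_i eliminating only its own interior N_i). (Lemma 3.6 of the paper, in matrix form: if a graph is edge-partitioned into regions whose interior vertex sets N_i are private to each region, then the Schur complement of the whole graph onto the boundary vertices K equals the union (sum) of the Schur complements of the individual regions onto their own boundaries.)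 -/

import Mathlib

open Matrix BigOperators

/-- The submatrix of `M` with rows indexed by `X` and columns indexed by `Y`. -/
def Matrix.subBlock {V : Type*} (M : Matrix V V ℝ) (X Y : Finset V) :
    Matrix X Y ℝ :=
  M.submatrix (fun x : X => (x : V)) (fun y : Y => (y : V))

/-- Auxiliary "spread-out" version of the inverse block of region `i`. -/
noncomputable def gAux {V I : Type*} [Fintype V] [DecidableEq V]
    (Nf : I → Finset V) (L : I → Matrix V V ℝ) (i : I) (a b : V) : ℝ :=
  if h : a ∈ Nf i ∧ b ∈ Nf i
  then ((L i).subBlock (Nf i) (Nf i))⁻¹ ⟨a, h.1⟩ ⟨b, h.2⟩ else 0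

lemma gAux_apply {V I : Type*} [Fintype V] [DecidableEq V]
    (Nf : I → Finset V) (L : I → Matrix V V ℝ) (i : I) {a b : V}
    (ha : a ∈ Nf i) (hb : b ∈ Nf i) :
    gAux Nf L i a b = ((L i).subBlock (Nf i) (Nf i))⁻¹ ⟨a, ha⟩ ⟨b, hb⟩ := by
  rw [gAux, dif_pos ⟨ha, hb⟩]

lemma gAux_zero_left {V I : Type*} [Fintype V] [DecidableEq V]
    (Nf : I → Finset V) (L : I → Matrix V V ℝ) (i : I) {a : V} (b : V)
    (ha : a ∉ Nf i) : gAux Nf L i a b = 0 := by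
  rw [gAux, dif_neg (fun h => ha h.1)]

lemma gAux_zero_right {V I : Type*} [Fintype V] [DecidableEq V]
    (Nf : I → Finset V) (L : I → Matrix V V ℝ) (i : I) (a : V) {b : V}
    (hb : b ∉ Nf i) : gAux Nf L i a b = 0 := by
  rw [gAux, dif_neg (fun h => hb h.2)]

/-- Summing `L i u a * gAux i a b` over `a ∈ Nf i` gives an entry of a matrix product. -/
lemma prodKX {V I : Type*} [Fintype V] [DecidableEq V]
    (Nf : I → Finset V) (L : I → Matrix V V ℝ) (i : I) (X : Finset V)
    {u b : V} (hu : u ∈ X) (hb : b ∈ Nf i) :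
    ∑ a ∈ Nf i, L i u a * gAux Nf L i a b
      = ((L i).subBlock X (Nf i) * ((L i).subBlock (Nf i) (Nf i))⁻¹) ⟨u, hu⟩ ⟨b, hb⟩ := by
  rw [Matrix.mul_apply, Finset.univ_eq_attach,
    ← Finset.sum_attach (Nf i) (fun a => L i u a * gAux Nf L i a b)]
  refine Finset.sum_congr rfl fun a _ => ?_
  rw [gAux_apply Nf L i a.2 hb]
  rfl

lemma sum_sum_sum_comm {α β γ M : Type*} [AddCommMonoid M]
    [Fintype α] [Fintype β] [Fintype γ] (f : α → β → γ → M) :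
    ∑ a : α, ∑ b : β, ∑ c : γ, f a b c = ∑ c : γ, ∑ a : α, ∑ b : β, f a b c :=
  calc ∑ a : α, ∑ b : β, ∑ c : γ, f a b c
      = ∑ a : α, ∑ c : γ, ∑ b : β, f a b c :=
        Finset.sum_congr rfl fun a _ => Finset.sum_comm
    _ = ∑ c : γ, ∑ a : α, ∑ b : β, f a b c := Finset.sum_comm

theorem schur_complement_decomposes_over_regions
    {V I : Type*} [Fintype V] [DecidableEq V] [Fintype I] [DecidableEq I]
    (Nf : I → Finset V)
    (hdisj : ∀ i j : I, i ≠ j → Disjoint (Nf i) (Nf j))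
    (L : I → Matrix V V ℝ)
    (hzero : ∀ i j : I, j ≠ i → ∀ u v : V, (u ∈ Nf j ∨ v ∈ Nf j) → L i u v = 0)
    (N K : Finset V)
    (hN : N = Finset.univ.biUnion Nf)
    (hK : K = Nᶜ)
    (hinv : ∀ i : I, IsUnit ((L i).subBlock (Nf i) (Nf i)).det) :
    IsUnit ((∑ i, L i).subBlock N N).det ∧
    (∑ i, L i).subBlock K K -
        (∑ i, L i).subBlock K N * ((∑ i, L i).subBlock N N)⁻¹ * (∑ i, L i).subBlock N K =
      ∑ i, ((L i).subBlock K K -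
        (L i).subBlock K (Nf i) * ((L i).subBlock (Nf i) (Nf i))⁻¹ * (L i).subBlock (Nf i) K) := by
  classical
  have hsub : ∀ i, Nf i ⊆ N := fun i =>
    hN ▸ Finset.subset_biUnion_of_mem Nf (Finset.mem_univ i)
  have hmemN : ∀ a : V, a ∈ N → ∃ i, a ∈ Nf i := by
    intro a ha
    rw [hN, Finset.mem_biUnion] at ha
    obtain ⟨i, -, hi⟩ := ha
    exact ⟨i, hi⟩
  have huniq : ∀ (i j : I) (a : V), a ∈ Nf i → a ∈ Nf j → i = j := by
    intro i j a hi hj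
    by_contra h
    exact (Finset.disjoint_left.mp (hdisj i j h) hi) hj
  have hcol : ∀ (i : I) (u v : V), v ∈ Nf i → (∑ j, L j) u v = L i u v := by
    intro i u v hv
    rw [Matrix.sum_apply]
    exact Finset.sum_eq_single i
      (fun j _ hj => hzero j i (Ne.symm hj) u v (Or.inr hv))
      (fun h => absurd (Finset.mem_univ i) h)
  have hrow : ∀ (i : I) (u v : V), u ∈ Nf i → (∑ j, L j) u v = L i u v := by
    intro i u v hu
    rw [Matrix.sum_apply]
    exact Finset.sum_eq_single i
      (fun j _ hj => hzero j i (Ne.symm hj) u v (Or.inl hu))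
      (fun h => absurd (Finset.mem_univ i) h)
  -- the candidate inverse of the big interior block
  set B : Matrix N N ℝ := fun a b => ∑ i, gAux Nf L i (a : V) (b : V) with hBdef
  have key1 : ∀ (i : I) (a c : V), a ∈ N →
      ∑ b ∈ N, (∑ j, L j) a b * gAux Nf L i b c
        = if a ∈ Nf i ∧ c ∈ Nf i ∧ a = c then 1 else 0 := by
    intro i a c ha
    by_cases hci : c ∈ Nf i
    · by_cases hai : a ∈ Nf i
      · rw [← Finset.sum_subset (hsub i)
            (fun b _ hb => by rw [gAux_zero_left Nf L i c hb, mul_zero])]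
        have h2 : ∑ b ∈ Nf i, (∑ j, L j) a b * gAux Nf L i b c
            = ∑ b ∈ Nf i, L i a b * gAux Nf L i b c :=
          Finset.sum_congr rfl fun b hb => by rw [hcol i a b hb]
        rw [h2, prodKX Nf L i (Nf i) hai hci, Matrix.mul_nonsing_inv _ (hinv i),
          Matrix.one_apply]
        simp [Subtype.ext_iff, hai, hci]
      · rw [if_neg (by tauto)]
        refine Finset.sum_eq_zero fun b hb => ?_
        by_cases hbi : b ∈ Nf i
        · obtain ⟨k, hk⟩ := hmemN a ha
          have hki : k ≠ i := fun e => hai (e ▸ hk)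
          rw [hcol i a b hbi, hzero i k hki a b (Or.inl hk), zero_mul]
        · rw [gAux_zero_left Nf L i c hbi, mul_zero]
    · rw [if_neg (by tauto)]
      refine Finset.sum_eq_zero fun b hb => ?_
      rw [gAux_zero_right Nf L i b hci, mul_zero]
  have hdelta : ∀ (a c : V), a ∈ N →
      (∑ i, if a ∈ Nf i ∧ c ∈ Nf i ∧ a = c then (1 : ℝ) else 0)
        = if a = c then 1 else 0 := by
    intro a c ha
    by_cases hac : a = c
    · subst hac
      obtain ⟨i0, hi0⟩ := hmemN a ha
      rw [if_pos rfl, Finset.sum_eq_single i0]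
      · rw [if_pos ⟨hi0, hi0, rfl⟩]
      · intro j _ hj
        rw [if_neg]
        rintro ⟨hj1, -, -⟩
        exact hj (huniq j i0 a hj1 hi0)
      · exact fun h => absurd (Finset.mem_univ i0) h
    · rw [if_neg hac]
      exact Finset.sum_eq_zero fun i _ => if_neg (by tauto)
  have hAB : (∑ i, L i).subBlock N N * B = 1 := by
    ext a c
    rw [Matrix.mul_apply]
    calc ∑ b : {x // x ∈ N}, (∑ i, L i).subBlock N N a b * B b c
        = ∑ b : {x // x ∈ N}, ∑ i,
            (∑ j, L j) (a : V) (b : V) * gAux Nf L i (b : V) (c : V) := by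
          refine Finset.sum_congr rfl fun b _ => ?_
          rw [hBdef]
          exact Finset.mul_sum _ _ _
      _ = ∑ i, ∑ b : {x // x ∈ N},
            (∑ j, L j) (a : V) (b : V) * gAux Nf L i (b : V) (c : V) := Finset.sum_comm
      _ = ∑ i, ∑ b ∈ N, (∑ j, L j) (a : V) b * gAux Nf L i b (c : V) := by
          exact Finset.sum_congr rfl fun i _ =>
            Finset.sum_coe_sort N (fun b => (∑ j, L j) (a : V) b * gAux Nf L i b (c : V))
      _ = ∑ i, if (a : V) ∈ Nf i ∧ (c : V) ∈ Nf i ∧ (a : V) = (c : V) then 1 else 0 :=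
          Finset.sum_congr rfl fun i _ => key1 i (a : V) (c : V) a.2
      _ = if (a : V) = (c : V) then 1 else 0 := hdelta (a : V) (c : V) a.2
      _ = (1 : Matrix N N ℝ) a c := by
          rw [Matrix.one_apply]
          exact if_congr Subtype.ext_iff.symm rfl rfl
  have hu1 : IsUnit ((∑ i, L i).subBlock N N).det := by
    have := invertibleOfRightInverse _ _ hAB
    exact Matrix.isUnit_det_of_invertible _
  have hinvB : ((∑ i, L i).subBlock N N)⁻¹ = B := Matrix.inv_eq_right_inv hAB
  refine ⟨hu1, ?_⟩
  have key3 : ∀ (i : I) (u v : V) (hu : u ∈ K) (hv : v ∈ K),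
      ∑ b ∈ N, ∑ a ∈ N, (∑ j, L j) u a * gAux Nf L i a b * (∑ j, L j) b v
        = ((L i).subBlock K (Nf i) * ((L i).subBlock (Nf i) (Nf i))⁻¹
            * (L i).subBlock (Nf i) K) ⟨u, hu⟩ ⟨v, hv⟩ := by
    intro i u v hu hv
    rw [← Finset.sum_subset (hsub i) (fun b _ hb =>
      Finset.sum_eq_zero fun a _ => by
        rw [gAux_zero_right Nf L i a hb, mul_zero, zero_mul])]
    have h1 : ∀ b ∈ Nf i,
        ∑ a ∈ N, (∑ j, L j) u a * gAux Nf L i a b * (∑ j, L j) b v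
          = (∑ a ∈ Nf i, L i u a * gAux Nf L i a b) * L i b v := by
      intro b hb
      rw [← Finset.sum_mul]
      congr 1
      · rw [← Finset.sum_subset (hsub i) (fun a _ ha => by
          rw [gAux_zero_left Nf L i b ha, mul_zero])]
        exact Finset.sum_congr rfl fun a ha => by rw [hcol i u a ha]
      · exact hrow i b v hb
    rw [Finset.sum_congr rfl h1]
    rw [Matrix.mul_apply, Finset.univ_eq_attach,
      ← Finset.sum_attach (Nf i)
        (fun b => (∑ a ∈ Nf i, L i u a * gAux Nf L i a b) * L i b v)]
    refine Finset.sum_congr rfl fun b _ => ?_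
    rw [prodKX Nf L i K hu b.2]
    rfl
  rw [hinvB]
  ext u v
  rw [Matrix.sub_apply, Matrix.sum_apply]
  have hRHS : ∀ i : I,
      ((L i).subBlock K K -
        (L i).subBlock K (Nf i) * ((L i).subBlock (Nf i) (Nf i))⁻¹
          * (L i).subBlock (Nf i) K) u v
        = L i (u : V) (v : V)
          - ((L i).subBlock K (Nf i) * ((L i).subBlock (Nf i) (Nf i))⁻¹
              * (L i).subBlock (Nf i) K) u v := fun i => rfl
  rw [Finset.sum_congr rfl fun i _ => hRHS i, Finset.sum_sub_distrib]
  congr 1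
  · rw [show ((∑ i, L i).subBlock K K) u v = (∑ i, L i) (u : V) (v : V) from rfl,
      Matrix.sum_apply]
  · calc ((∑ i, L i).subBlock K N * B * (∑ i, L i).subBlock N K) u v
        = ∑ b : {x // x ∈ N}, (∑ a : {x // x ∈ N},
            (∑ j, L j) (u : V) (a : V) * B a b) * (∑ j, L j) (b : V) (v : V) := by
          rw [Matrix.mul_apply]
          exact Finset.sum_congr rfl fun b _ => by rw [Matrix.mul_apply]; rfl
      _ = ∑ b : {x // x ∈ N}, ∑ a : {x // x ∈ N}, ∑ i,
            (∑ j, L j) (u : V) (a : V) * gAux Nf L i (a : V) (b : V)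
              * (∑ j, L j) (b : V) (v : V) := by
          refine Finset.sum_congr rfl fun b _ => ?_
          rw [Finset.sum_mul]
          refine Finset.sum_congr rfl fun a _ => ?_
          rw [hBdef]
          simp only [Finset.mul_sum, Finset.sum_mul]
      _ = ∑ i, ∑ b : {x // x ∈ N}, ∑ a : {x // x ∈ N},
            (∑ j, L j) (u : V) (a : V) * gAux Nf L i (a : V) (b : V)
              * (∑ j, L j) (b : V) (v : V) := by
          exact sum_sum_sum_comm fun (b a : {x // x ∈ N}) (i : I) =>
            (∑ j, L j) (u : V) (a : V) * gAux Nf L i (a : V) (b : V)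
              * (∑ j, L j) (b : V) (v : V)
      _ = ∑ i, ∑ b ∈ N, ∑ a ∈ N,
            (∑ j, L j) (u : V) a * gAux Nf L i a b * (∑ j, L j) b (v : V) := by
          refine Finset.sum_congr rfl fun i _ => ?_
          rw [← Finset.sum_coe_sort N (fun b => ∑ a ∈ N,
            (∑ j, L j) (u : V) a * gAux Nf L i a b * (∑ j, L j) b (v : V))]
          exact Finset.sum_congr rfl fun b _ =>
            Finset.sum_coe_sort N (fun a =>
              (∑ j, L j) (u : V) a * gAux Nf L i a (b : V) * (∑ j, L j) (b : V) (v : V))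
      _ = ∑ i, ((L i).subBlock K (Nf i) * ((L i).subBlock (Nf i) (Nf i))⁻¹
            * (L i).subBlock (Nf i) K) u v := by
          exact Finset.sum_congr rfl fun i _ => key3 i (u : V) (v : V) u.2 v.2
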